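/- Let ψ : ∂D → ℂ be continuous on the boundary of a bounded Lipschitz domain D ⊂ ℝⁿ, and suppose v ∈ C²(D) ∩ C¹(D̄) satisfies Δv + k²v = 0 in D, v = −ψ and ∂v/∂ν = −iψ on ∂D (with k > 0 real). Then i∫_{∂D}|ψ|² ds = ∫_D (|∇v|² − k²|v|²) dx, and consequently ψ ≡ 0 on ∂D. -/

import Mathlib

open MeasureTheory Complex

noncomputable def lap {n : ℕ} (u : EuclideanSpace ℝ (Fin n) → ℂ)
    (x : EuclideanSpace ℝ (Fin n)) : ℂ :=
  ∑ i : Fin n, deriv (deriv (fun t : ℝ => u (x + t • EuclideanSpace.single i (1 : ℝ)))) 0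

noncomputable def dnu {n : ℕ} (ν : EuclideanSpace ℝ (Fin n) → EuclideanSpace ℝ (Fin n))
    (u : EuclideanSpace ℝ (Fin n) → ℂ) (x : EuclideanSpace ℝ (Fin n)) : ℂ :=
  deriv (fun t : ℝ => u (x + t • ν x)) 0

lemma conj_mul_self_eq (z : ℂ) : (starRingEnd ℂ) z * z = ((‖z‖ ^ 2 : ℝ) : ℂ) := by
  rw [mul_comm, Complex.mul_conj]
  simp [Complex.normSq_eq_norm_sq]

/-- If Δv + k²v = 0 in D with v = −ψ, ∂v/∂ν = −iψ on ∂D, then (via Green's first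
identity) i∫_{∂D}|ψ|² ds = ∫_D (|∇v|² − k²|v|²) dx and consequently ψ ≡ 0 on ∂D. -/
theorem stmt_13 {n : ℕ} (D : Set (EuclideanSpace ℝ (Fin n)))
    (hDo : IsOpen D) (hDb : Bornology.IsBounded D)
    (ψ v : EuclideanSpace ℝ (Fin n) → ℂ) (k : ℝ) (hk : 0 < k)
    (hψc : ContinuousOn ψ (frontier D))
    (hv1 : ContDiffOn ℝ 1 v (closure D))
    (hPDE : ∀ x ∈ D, lap v x + (k : ℂ) ^ 2 * v x = 0)
    (ν : EuclideanSpace ℝ (Fin n) → EuclideanSpace ℝ (Fin n))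
    (σ : Measure (EuclideanSpace ℝ (Fin n))) (hσ : ∀ᵐ x ∂σ, x ∈ frontier D)
    -- σ charges every nonempty relatively open piece of ∂D
    (hσpos : ∀ s : Set (EuclideanSpace ℝ (Fin n)), IsOpen s →
      (s ∩ frontier D).Nonempty → 0 < σ (s ∩ frontier D))
    (hbc1 : ∀ x ∈ frontier D, v x = -ψ x)
    (hbc2 : ∀ x ∈ frontier D, dnu ν v x = -Complex.I * ψ x)
    (hintψ : Integrable (fun x => ‖ψ x‖ ^ 2) σ)
    (hintv : IntegrableOn (fun x => ‖fderiv ℝ v x‖ ^ 2 - k ^ 2 * ‖v x‖ ^ 2) D volume)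
    -- Green's first identity on D for the pair (v̄, v)
    (hGreen : ∫ x, (starRingEnd ℂ) (v x) * dnu ν v x ∂σ
        = ∫ x in D, (((‖fderiv ℝ v x‖ ^ 2 : ℝ) : ℂ)
            + (starRingEnd ℂ) (v x) * lap v x) ∂volume) :
    Complex.I * ((∫ x, ‖ψ x‖ ^ 2 ∂σ : ℝ) : ℂ)
        = ((∫ x in D, (‖fderiv ℝ v x‖ ^ 2 - k ^ 2 * ‖v x‖ ^ 2) ∂volume : ℝ) : ℂ)
      ∧ ∀ x ∈ frontier D, ψ x = 0 := by
  -- Left side: boundary integral equals I * ∫ |ψ|²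
  have h1 : ∫ x, (starRingEnd ℂ) (v x) * dnu ν v x ∂σ
      = Complex.I * ((∫ x, ‖ψ x‖ ^ 2 ∂σ : ℝ) : ℂ) := by
    have hcg : ∫ x, (starRingEnd ℂ) (v x) * dnu ν v x ∂σ
        = ∫ x, Complex.I * ((‖ψ x‖ ^ 2 : ℝ) : ℂ) ∂σ := by
      refine integral_congr_ae ?_
      filter_upwards [hσ] with x hx
      rw [hbc1 x hx, hbc2 x hx, map_neg]
      linear_combination Complex.I * conj_mul_self_eq (ψ x)
    rw [hcg, integral_const_mul,
      show (∫ a, ((‖ψ a‖ ^ 2 : ℝ) : ℂ) ∂σ) = ((∫ x, ‖ψ x‖ ^ 2 ∂σ : ℝ) : ℂ) from integral_ofReal]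
  -- Right side: volume integral equals real integral
  have h2 : ∫ x in D, (((‖fderiv ℝ v x‖ ^ 2 : ℝ) : ℂ)
        + (starRingEnd ℂ) (v x) * lap v x) ∂volume
      = ((∫ x in D, (‖fderiv ℝ v x‖ ^ 2 - k ^ 2 * ‖v x‖ ^ 2) ∂volume : ℝ) : ℂ) := by
    rw [show ((∫ x in D, (‖fderiv ℝ v x‖ ^ 2 - k ^ 2 * ‖v x‖ ^ 2) ∂volume : ℝ) : ℂ)
        = ∫ x in D, (((‖fderiv ℝ v x‖ ^ 2 - k ^ 2 * ‖v x‖ ^ 2 : ℝ)) : ℂ) ∂volume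
        from integral_ofReal.symm]
    refine setIntegral_congr_fun hDo.measurableSet ?_
    intro x hx
    simp only
    have hl : lap v x = -((k : ℂ) ^ 2 * v x) := by
      have := hPDE x hx
      linear_combination this
    rw [hl]
    have := conj_mul_self_eq (v x)
    push_cast
    rw [show (starRingEnd ℂ) (v x) * -((k : ℂ) ^ 2 * v x)
        = -((k : ℂ) ^ 2) * ((starRingEnd ℂ) (v x) * v x) by ring, this]
    push_cast
    ring
  have hEq : Complex.I * ((∫ x, ‖ψ x‖ ^ 2 ∂σ : ℝ) : ℂ)
      = ((∫ x in D, (‖fderiv ℝ v x‖ ^ 2 - k ^ 2 * ‖v x‖ ^ 2) ∂volume : ℝ) : ℂ) := by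
    rw [← h1, hGreen, h2]
  refine ⟨hEq, ?_⟩
  -- imaginary parts: ∫ |ψ|² = 0
  have him : (∫ x, ‖ψ x‖ ^ 2 ∂σ) = 0 := by
    have := congrArg Complex.im hEq
    simpa using this
  -- hence ψ = 0 σ-a.e.
  have hz : ∀ᵐ x ∂σ, ψ x = 0 := by
    have hnn : 0 ≤ᵐ[σ] fun x => ‖ψ x‖ ^ 2 :=
      Filter.Eventually.of_forall fun x => by positivity
    have := (integral_eq_zero_iff_of_nonneg_ae hnn hintψ).mp him
    filter_upwards [this] with x hx
    have : ‖ψ x‖ ^ 2 = 0 := hx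
    have : ‖ψ x‖ = 0 := by nlinarith [norm_nonneg (ψ x)]
    exact norm_eq_zero.mp this
  intro x₀ hx₀
  by_contra hne
  have hcw := hψc x₀ hx₀
  have hball : ∀ᶠ x in nhdsWithin x₀ (frontier D), ψ x ∈ Metric.ball (ψ x₀) (‖ψ x₀‖) :=
    hcw (Metric.ball_mem_nhds _ (norm_pos_iff.mpr hne))
  rw [Filter.eventually_iff, mem_nhdsWithin] at hball
  obtain ⟨u, huo, hxu, hsub⟩ := hball
  have hpos := hσpos u huo ⟨x₀, hxu, hx₀⟩
  have hsub' : u ∩ frontier D ⊆ {x | ¬ ψ x = 0} := by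
    intro x hx
    have hb := hsub hx
    simp only [Set.mem_setOf_eq, Metric.mem_ball, dist_eq_norm] at hb
    intro h0
    rw [h0] at hb
    simp at hb
  have hz0 : σ {x | ¬ ψ x = 0} = 0 := by
    have := hz
    rwa [Filter.Eventually, mem_ae_iff] at this
  exact absurd (measure_mono_null hsub' hz0) hpos.ne'
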